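/- (Theorem 3.1, case d=2; leading asymptotics of the scattering amplitude.) There exist constants C > 0 and κ₀ > 1 such that for all κ ≥ κ₀ the matrix A(κ) is invertible and for all k, ℓ ∈ ℝ² with |k| = |ℓ| = κ one has |f(k,ℓ) − (ln κ)^{−1} Σ_{j=1}^n (−1/(2π)) e^{i(k−ℓ)·y_j} − (ln κ)^{−2} Σ_{j=1}^n (α_j − i/4) e^{i(k−ℓ)·y_j}| ≤ C (ln κ)^{−3}. -/

import Mathlib

set_option maxHeartbeats 1000000


open Complex Finset Matrix

noncomputable section

/-- The matrix `A(κ) = (ln κ/(2π)) I + Z + G(κ)` for a two-dimensional multipoint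
potential, where `Z = diag(α_j - i/4)`. -/
def A2 (n : ℕ) (α : Fin n → ℂ) (G : ℝ → Matrix (Fin n) (Fin n) ℂ) (κ : ℝ) :
    Matrix (Fin n) (Fin n) ℂ :=
  ((Real.log κ / (2 * Real.pi) : ℝ) : ℂ) • (1 : Matrix (Fin n) (Fin n) ℂ) +
    Matrix.diagonal (fun j => α j - Complex.I / 4) + G κ

/-- `q(k) = A(κ)⁻¹ b(k)` with `b(k)_j = -e^{i k·y_j}`. -/
def q2 (n : ℕ) (y : Fin n → EuclideanSpace ℝ (Fin 2)) (α : Fin n → ℂ)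
    (G : ℝ → Matrix (Fin n) (Fin n) ℂ) (κ : ℝ) (k : EuclideanSpace ℝ (Fin 2)) :
    Fin n → ℂ :=
  (A2 n α G κ)⁻¹ *ᵥ fun j => -Complex.exp (Complex.I * (inner ℝ k (y j) : ℝ))

/-- The scattering amplitude `f(k,ℓ) = (2π)⁻² Σ_j q_j(k) e^{-iℓ·y_j}`. -/
def f2 (n : ℕ) (y : Fin n → EuclideanSpace ℝ (Fin 2)) (α : Fin n → ℂ)
    (G : ℝ → Matrix (Fin n) (Fin n) ℂ) (κ : ℝ) (k ℓ : EuclideanSpace ℝ (Fin 2)) : ℂ :=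
  ((2 * Real.pi : ℂ) ^ 2)⁻¹ *
    ∑ j, q2 n y α G κ k j * Complex.exp (-Complex.I * (inner ℝ ℓ (y j) : ℝ))

/-- A priori bound: if `τ w + M w = v` with `‖τ‖ ≥ t` large compared to the entries of `M`,
then `‖w‖∞ ≤ 2‖v‖∞/t`. -/
private lemma key_bound {n : ℕ} (M : Matrix (Fin n) (Fin n) ℂ) (τ : ℂ) (t B s : ℝ)
    (hτ : t ≤ ‖τ‖) (hB : 0 ≤ B) (hs : 0 ≤ s)
    (ht : 2 * (n * B) + 1 ≤ t)
    (hM : ∀ i j, ‖M i j‖ ≤ B)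
    (w v : Fin n → ℂ)
    (hAw : ∀ i, τ * w i + (M *ᵥ w) i = v i)
    (hv : ∀ i, ‖v i‖ ≤ s) :
    ∀ i, ‖w i‖ ≤ 2 * s / t := by
  have hnB : (0 : ℝ) ≤ (n : ℝ) * B := mul_nonneg (Nat.cast_nonneg n) hB
  have ht0 : (0 : ℝ) < t := by linarith
  intro i
  obtain ⟨i₀, -, hi₀⟩ := Finset.exists_max_image Finset.univ (fun j => ‖w j‖)
    ⟨i, Finset.mem_univ i⟩
  have hW : (0 : ℝ) ≤ ‖w i₀‖ := norm_nonneg _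
  have hMw : ‖(M *ᵥ w) i₀‖ ≤ (n : ℝ) * B * ‖w i₀‖ := by
    have hrepr : (M *ᵥ w) i₀ = ∑ j, M i₀ j * w j := rfl
    rw [hrepr]
    calc ‖∑ j, M i₀ j * w j‖ ≤ ∑ j, ‖M i₀ j * w j‖ := norm_sum_le _ _
      _ ≤ ∑ _j : Fin n, B * ‖w i₀‖ := by
          refine Finset.sum_le_sum fun j _ => ?_
          rw [norm_mul]
          exact mul_le_mul (hM _ _) (hi₀ j (Finset.mem_univ j)) (norm_nonneg _) hB
      _ = (n : ℝ) * B * ‖w i₀‖ := by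
          rw [Finset.sum_const, Finset.card_univ, Fintype.card_fin, nsmul_eq_mul]; ring
  have h0 : τ * w i₀ = v i₀ - (M *ᵥ w) i₀ := by rw [← hAw i₀]; ring
  have h1 : t * ‖w i₀‖ ≤ s + (n : ℝ) * B * ‖w i₀‖ := by
    calc t * ‖w i₀‖ ≤ ‖τ‖ * ‖w i₀‖ := mul_le_mul_of_nonneg_right hτ hW
      _ = ‖τ * w i₀‖ := (norm_mul _ _).symm
      _ = ‖v i₀ - (M *ᵥ w) i₀‖ := by rw [h0]
      _ ≤ ‖v i₀‖ + ‖(M *ᵥ w) i₀‖ := norm_sub_le _ _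
      _ ≤ s + (n : ℝ) * B * ‖w i₀‖ := add_le_add (hv i₀) hMw
  have h2 : ‖w i‖ ≤ ‖w i₀‖ := hi₀ i (Finset.mem_univ i)
  rw [le_div_iff₀ ht0]
  nlinarith [mul_le_mul_of_nonneg_right ht hW, mul_le_mul_of_nonneg_right h2 ht0.le, h1]

/-- Theorem 3.1, case d = 2: leading asymptotics of the scattering amplitude. -/
theorem stmt1 (n : ℕ) (y : Fin n → EuclideanSpace ℝ (Fin 2)) (α : Fin n → ℂ)
    (hy : Function.Injective y)
    (G : ℝ → Matrix (Fin n) (Fin n) ℂ)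
    (hGdiag : ∀ κ : ℝ, 1 ≤ κ → ∀ j, G κ j j = 0)
    (c : ℝ) (hc : 0 < c)
    (hG : ∀ κ : ℝ, 1 ≤ κ → ∀ j j' : Fin n, j ≠ j' → ‖G κ j j'‖ ≤ c / Real.sqrt κ) :
    ∃ C > (0 : ℝ), ∃ κ₀ > (1 : ℝ), ∀ κ ≥ κ₀, IsUnit (A2 n α G κ) ∧
      ∀ k ℓ : EuclideanSpace ℝ (Fin 2), ‖k‖ = κ → ‖ℓ‖ = κ →
        ‖f2 n y α G κ k ℓ -
            (Real.log κ : ℂ)⁻¹ *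
              ∑ j, (-1 / (2 * Real.pi) : ℂ) *
                Complex.exp (Complex.I * (inner ℝ (k - ℓ) (y j) : ℝ)) -
            ((Real.log κ : ℂ) ^ 2)⁻¹ *
              ∑ j, (α j - Complex.I / 4) *
                Complex.exp (Complex.I * (inner ℝ (k - ℓ) (y j) : ℝ))‖ ≤
          C / (Real.log κ) ^ 3 := by
  classical
  have hπ : (0 : ℝ) < Real.pi := Real.pi_pos
  set B : ℝ := (∑ j, ‖α j‖) + 1 / 4 + c with hBdef
  have hsum0 : (0 : ℝ) ≤ ∑ j, ‖α j‖ := Finset.sum_nonneg fun j _ => norm_nonneg _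
  have hB0 : (0 : ℝ) < B := by rw [hBdef]; linarith
  have hnB : (0 : ℝ) ≤ (n : ℝ) * B := mul_nonneg (Nat.cast_nonneg n) hB0.le
  refine ⟨4 * Real.pi * ((n : ℝ) * B) ^ 2 * n + 2 * (n : ℝ) ^ 2 * c + 1, by positivity,
    Real.exp (2 * Real.pi * (2 * ((n : ℝ) * B) + 1)), ?_, ?_⟩
  · have h0 : (0 : ℝ) < 2 * Real.pi * (2 * ((n : ℝ) * B) + 1) := by positivity
    calc (1 : ℝ) = Real.exp 0 := Real.exp_zero.symm
      _ < _ := Real.exp_lt_exp.mpr h0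
  intro κ hκ
  have hκ1 : (1 : ℝ) < κ := by
    refine lt_of_lt_of_le ?_ hκ
    calc (1 : ℝ) = Real.exp 0 := Real.exp_zero.symm
      _ < _ := Real.exp_lt_exp.mpr (by positivity)
  have hκ0 : (1 : ℝ) ≤ κ := hκ1.le
  have hlog : 2 * Real.pi * (2 * ((n : ℝ) * B) + 1) ≤ Real.log κ := by
    have := Real.log_le_log (Real.exp_pos _) hκ
    rwa [Real.log_exp] at this
  set Lr := Real.log κ with hLrdef
  have hL0 : (0 : ℝ) < Lr := lt_of_lt_of_le (by positivity) hlog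
  set t : ℝ := Lr / (2 * Real.pi) with htdef
  have ht0 : (0 : ℝ) < t := by positivity
  have ht : 2 * ((n : ℝ) * B) + 1 ≤ t := by
    rw [htdef, le_div_iff₀ (by positivity)]; linarith
  set τ : ℂ := ((Lr / (2 * Real.pi) : ℝ) : ℂ) with hτdef
  have hτnorm : ‖τ‖ = t := by
    rw [hτdef, Complex.norm_real, Real.norm_eq_abs, abs_of_pos ht0]
  have hτ0 : τ ≠ 0 := by
    rw [hτdef]; exact_mod_cast Complex.ofReal_ne_zero.mpr ht0.ne'
  set M : Matrix (Fin n) (Fin n) ℂ := Matrix.diagonal (fun j => α j - Complex.I / 4) + G κ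
    with hMdef
  have hA : A2 n α G κ = τ • 1 + M := by rw [A2, hMdef, add_assoc]
  have hsq1 : (1 : ℝ) ≤ Real.sqrt κ := by
    rw [show (1 : ℝ) = Real.sqrt 1 from (Real.sqrt_one).symm]
    exact Real.sqrt_le_sqrt hκ0
  have hGent : ∀ i j, ‖G κ i j‖ ≤ c / Real.sqrt κ := by
    intro i j
    by_cases h : i = j
    · subst h; rw [hGdiag κ hκ0 i, norm_zero]; positivity
    · exact hG κ hκ0 i j h
  have hMent : ∀ i j, ‖M i j‖ ≤ B := by
    intro i j
    rw [hMdef, Matrix.add_apply]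
    by_cases h : i = j
    · subst h
      rw [Matrix.diagonal_apply_eq, hGdiag κ hκ0 i, add_zero]
      have h1 : ‖α i - Complex.I / 4‖ ≤ ‖α i‖ + ‖Complex.I / 4‖ := norm_sub_le _ _
      have h2 : ‖Complex.I / 4‖ = 1 / 4 := by
        rw [norm_div, Complex.norm_I]; norm_num
      have h3 : ‖α i‖ ≤ ∑ j, ‖α j‖ :=
        Finset.single_le_sum (f := fun j => ‖α j‖) (fun j _ => norm_nonneg _)
          (Finset.mem_univ i)
      rw [hBdef]; rw [h2] at h1; linarith
    · rw [Matrix.diagonal_apply_ne _ h, zero_add]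
      have h1 : c / Real.sqrt κ ≤ c := by
        rw [div_le_iff₀ (by positivity)]; nlinarith
      rw [hBdef]; linarith [hGent i j]
  have hAmulVec : ∀ w : Fin n → ℂ, A2 n α G κ *ᵥ w = τ • w + M *ᵥ w := by
    intro w
    rw [hA, Matrix.add_mulVec, Matrix.smul_mulVec, Matrix.one_mulVec]
  -- invertibility
  have hdet : (A2 n α G κ).det ≠ 0 := by
    intro h
    obtain ⟨v, hv0, hv⟩ := (Matrix.exists_mulVec_eq_zero_iff).mpr h
    have hAv : ∀ i, τ * v i + (M *ᵥ v) i = (0 : Fin n → ℂ) i := by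
      intro i
      have := congrFun ((hAmulVec v).symm.trans hv) i
      simpa [smul_eq_mul] using this
    have hb0 : ∀ i, ‖(0 : Fin n → ℂ) i‖ ≤ (0 : ℝ) := by simp
    have := key_bound M τ t B 0 hτnorm.ge hB0.le le_rfl ht hMent v 0 hAv hb0
    apply hv0
    funext i
    have h1 := this i
    rw [mul_zero, zero_div] at h1
    simpa using le_antisymm h1 (norm_nonneg _)
  have hunit : IsUnit (A2 n α G κ) := (Matrix.isUnit_iff_isUnit_det _).mpr hdet.isUnit
  refine ⟨hunit, ?_⟩
  intro k ℓ hk hℓ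
  set b : Fin n → ℂ := fun j => -Complex.exp (Complex.I * (inner ℝ k (y j) : ℝ)) with hb
  set q : Fin n → ℂ := q2 n y α G κ k with hq
  have hAq : A2 n α G κ *ᵥ q = b := by
    rw [hq, q2, Matrix.mulVec_mulVec, Matrix.mul_nonsing_inv _ hdet.isUnit,
      Matrix.one_mulVec, hb]
  set Mb : Fin n → ℂ := M *ᵥ b with hMb
  set MMb : Fin n → ℂ := M *ᵥ Mb with hMMb
  set r : Fin n → ℂ := q - τ⁻¹ • b + (τ * τ)⁻¹ • Mb with hr
  have hqMb : ∀ i, τ * q i + (M *ᵥ q) i = b i := by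
    intro i
    have := congrFun ((hAmulVec q).symm.trans hAq) i
    simpa [smul_eq_mul] using this
  have hAr : ∀ i, τ * r i + (M *ᵥ r) i = (τ * τ)⁻¹ * MMb i := by
    intro i
    have h1 : (M *ᵥ r) i = (M *ᵥ q) i - τ⁻¹ * Mb i + (τ * τ)⁻¹ * MMb i := by
      rw [hr, Matrix.mulVec_add, Matrix.mulVec_sub, Matrix.mulVec_smul, Matrix.mulVec_smul]
      simp [smul_eq_mul, hMb, hMMb]
    have h2 : (M *ᵥ q) i = b i - τ * q i := by rw [← hqMb i]; ring
    have hri : r i = q i - τ⁻¹ * b i + (τ * τ)⁻¹ * Mb i := by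
      rw [hr]; simp [smul_eq_mul]
    rw [hri, h1, h2]
    field_simp
    ring
  -- norms
  have hbnorm : ∀ j, ‖b j‖ = 1 := by
    intro j
    rw [hb]
    simp only [norm_neg, Complex.norm_exp]
    norm_num [Complex.mul_re]
  have hvecbound : ∀ (v : Fin n → ℂ) (s : ℝ), (∀ j, ‖v j‖ ≤ s) → 0 ≤ s →
      ∀ i, ‖(M *ᵥ v) i‖ ≤ (n : ℝ) * B * s := by
    intro v s hvs hs i
    have hrepr : (M *ᵥ v) i = ∑ j, M i j * v j := rfl
    rw [hrepr]
    calc ‖∑ j, M i j * v j‖ ≤ ∑ j, ‖M i j * v j‖ := norm_sum_le _ _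
      _ ≤ ∑ _j : Fin n, B * s := by
          refine Finset.sum_le_sum fun j _ => ?_
          rw [norm_mul]
          exact mul_le_mul (hMent i j) (hvs j) (norm_nonneg _) hB0.le
      _ = (n : ℝ) * B * s := by
          rw [Finset.sum_const, Finset.card_univ, Fintype.card_fin, nsmul_eq_mul]; ring
  have hMbB : ∀ i, ‖Mb i‖ ≤ (n : ℝ) * B := by
    intro i
    have := hvecbound b 1 (fun j => (hbnorm j).le) zero_le_one i
    rw [mul_one] at this
    exact this
  have hMMbB : ∀ i, ‖MMb i‖ ≤ ((n : ℝ) * B) * ((n : ℝ) * B) :=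
    hvecbound Mb ((n : ℝ) * B) hMbB hnB
  have hrB : ∀ i, ‖r i‖ ≤ 2 * (((n : ℝ) * B) * ((n : ℝ) * B) / (t * t)) / t := by
    refine key_bound M τ t B (((n : ℝ) * B) * ((n : ℝ) * B) / (t * t)) hτnorm.ge hB0.le
      (div_nonneg (mul_nonneg hnB hnB) (mul_nonneg ht0.le ht0.le)) ht hMent r
      (fun i => (τ * τ)⁻¹ * MMb i) (fun i => hAr i) ?_
    intro i
    rw [norm_mul, norm_inv, norm_mul, hτnorm]
    rw [div_eq_mul_inv, mul_comm (((n : ℝ) * B) * ((n : ℝ) * B))]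
    exact mul_le_mul_of_nonneg_left (hMMbB i)
      (inv_nonneg.mpr (mul_nonneg ht0.le ht0.le))
  have hGbB : ∀ i, ‖(G κ *ᵥ b) i‖ ≤ (n : ℝ) * (c / Real.sqrt κ) := by
    intro i
    have hrepr : (G κ *ᵥ b) i = ∑ j, G κ i j * b j := rfl
    rw [hrepr]
    calc ‖∑ j, G κ i j * b j‖ ≤ ∑ j, ‖G κ i j * b j‖ := norm_sum_le _ _
      _ ≤ ∑ _j : Fin n, c / Real.sqrt κ := by
          refine Finset.sum_le_sum fun j _ => ?_
          rw [norm_mul, hbnorm j, mul_one]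
          exact hGent i j
      _ = (n : ℝ) * (c / Real.sqrt κ) := by
          rw [Finset.sum_const, Finset.card_univ, Fintype.card_fin, nsmul_eq_mul]
  have hMbi : ∀ i, Mb i = (α i - Complex.I / 4) * b i + (G κ *ᵥ b) i := by
    intro i
    rw [hMb, hMdef, Matrix.add_mulVec]
    simp [Matrix.mulVec_diagonal]
  -- exponential identities
  have hE : ∀ j, Complex.exp (Complex.I * ((inner ℝ k (y j) : ℝ) : ℂ)) *
      Complex.exp (-Complex.I * ((inner ℝ ℓ (y j) : ℝ) : ℂ)) =
      Complex.exp (Complex.I * ((inner ℝ (k - ℓ) (y j) : ℝ) : ℂ)) := by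
    intro j
    rw [← Complex.exp_add]
    congr 1
    rw [show (inner ℝ (k - ℓ) (y j) : ℝ) = (inner ℝ k (y j) : ℝ) - (inner ℝ ℓ (y j) : ℝ) from
      inner_sub_left _ _ _]
    push_cast
    ring
  have heℓnorm : ∀ j, ‖Complex.exp (-Complex.I * ((inner ℝ ℓ (y j) : ℝ) : ℂ))‖ = 1 := by
    intro j
    simp only [Complex.norm_exp]
    norm_num [Complex.mul_re]
  -- the main algebraic identity
  have hL0' : (Lr : ℂ) ≠ 0 := by exact_mod_cast hL0.ne'
  have hπ0 : ((Real.pi : ℝ) : ℂ) ≠ 0 := by exact_mod_cast Real.pi_ne_zero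
  have hτc : τ = (Lr : ℂ) / (2 * (Real.pi : ℂ)) := by
    rw [hτdef]; push_cast; ring
  have hfeq : f2 n y α G κ k ℓ -
      (Lr : ℂ)⁻¹ * ∑ j, (-1 / (2 * Real.pi) : ℂ) *
        Complex.exp (Complex.I * (inner ℝ (k - ℓ) (y j) : ℝ)) -
      ((Lr : ℂ) ^ 2)⁻¹ * ∑ j, (α j - Complex.I / 4) *
        Complex.exp (Complex.I * (inner ℝ (k - ℓ) (y j) : ℝ)) =
      ((2 * Real.pi : ℂ) ^ 2)⁻¹ *
        ∑ j, (r j - (τ * τ)⁻¹ * (G κ *ᵥ b) j) *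
          Complex.exp (-Complex.I * (inner ℝ ℓ (y j) : ℝ)) := by
    rw [f2, ← hq]
    rw [Finset.mul_sum, Finset.mul_sum, Finset.mul_sum, Finset.mul_sum]
    rw [← Finset.sum_sub_distrib, ← Finset.sum_sub_distrib]
    refine Finset.sum_congr rfl fun j _ => ?_
    have hqj : q j = τ⁻¹ * b j - (τ * τ)⁻¹ * Mb j + r j := by
      have hri : r j = q j - τ⁻¹ * b j + (τ * τ)⁻¹ * Mb j := by
        rw [hr]; simp [smul_eq_mul]
      linear_combination -hri
    have hbj : b j = -Complex.exp (Complex.I * ((inner ℝ k (y j) : ℝ) : ℂ)) := by rw [hb]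
    have hLeq : (Lr : ℂ) = (2 * (Real.pi : ℂ)) * τ := by
      rw [hτc]; field_simp
    rw [hqj, hMbi j, ← hE j, hbj, hLeq]
    simp only [mul_inv, inv_pow, mul_pow, div_eq_mul_inv, one_mul]
    ring
  rw [hfeq]
  -- final estimate
  have hsqrtLr : c / Real.sqrt κ ≤ 2 * c / Lr := by
    have h1 : Lr ≤ 2 * Real.sqrt κ := by
      have h3 : Real.log (Real.sqrt κ) = Real.log κ / 2 :=
        Real.log_sqrt (by linarith)
      have h4 : Real.log (Real.sqrt κ) ≤ Real.sqrt κ - 1 :=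
        Real.log_le_sub_one_of_pos (by positivity)
      have h5 : Real.log κ / 2 ≤ Real.sqrt κ - 1 := by rw [← h3]; exact h4
      rw [hLrdef]; linarith
    have hsκ : 0 < Real.sqrt κ := Real.sqrt_pos.mpr (by linarith)
    rw [div_le_div_iff₀ hsκ hL0]
    nlinarith
  set P : ℝ := 2 * (((n : ℝ) * B) * ((n : ℝ) * B) / (t * t)) / t +
      (t * t)⁻¹ * ((n : ℝ) * (2 * c / Lr)) with hPdef
  have hterm : ∀ j, ‖(r j - (τ * τ)⁻¹ * (G κ *ᵥ b) j) *
      Complex.exp (-Complex.I * ((inner ℝ ℓ (y j) : ℝ) : ℂ))‖ ≤ P := by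
    intro j
    rw [norm_mul, heℓnorm j, mul_one]
    have h1 : ‖(τ * τ)⁻¹ * (G κ *ᵥ b) j‖ ≤ (t * t)⁻¹ * ((n : ℝ) * (2 * c / Lr)) := by
      rw [norm_mul, norm_inv, norm_mul, hτnorm]
      refine mul_le_mul_of_nonneg_left ?_ (inv_nonneg.mpr (mul_nonneg ht0.le ht0.le))
      refine le_trans (hGbB j) ?_
      have : (0 : ℝ) ≤ (n : ℝ) := Nat.cast_nonneg n
      exact mul_le_mul_of_nonneg_left hsqrtLr this
    calc ‖r j - (τ * τ)⁻¹ * (G κ *ᵥ b) j‖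
        ≤ ‖r j‖ + ‖(τ * τ)⁻¹ * (G κ *ᵥ b) j‖ := norm_sub_le _ _
      _ ≤ P := by rw [hPdef]; exact add_le_add (hrB j) h1
  have hnorm2π : ‖((2 * Real.pi : ℂ) ^ 2)⁻¹‖ = ((2 * Real.pi) ^ 2)⁻¹ := by
    rw [norm_inv, norm_pow, norm_mul, Complex.norm_real]
    simp [abs_of_pos hπ]
  calc ‖((2 * Real.pi : ℂ) ^ 2)⁻¹ * ∑ j, (r j - (τ * τ)⁻¹ * (G κ *ᵥ b) j) *
        Complex.exp (-Complex.I * (inner ℝ ℓ (y j) : ℝ))‖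
      = ((2 * Real.pi) ^ 2)⁻¹ * ‖∑ j, (r j - (τ * τ)⁻¹ * (G κ *ᵥ b) j) *
        Complex.exp (-Complex.I * (inner ℝ ℓ (y j) : ℝ))‖ := by rw [norm_mul, hnorm2π]
    _ ≤ ((2 * Real.pi) ^ 2)⁻¹ * ∑ _j : Fin n, P := by
        refine mul_le_mul_of_nonneg_left ?_ (by positivity)
        exact le_trans (norm_sum_le _ _) (Finset.sum_le_sum fun j _ => hterm j)
    _ = ((2 * Real.pi) ^ 2)⁻¹ * ((n : ℝ) * P) := by
        rw [Finset.sum_const, Finset.card_univ, Fintype.card_fin, nsmul_eq_mul]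
    _ ≤ (4 * Real.pi * ((n : ℝ) * B) ^ 2 * n + 2 * (n : ℝ) ^ 2 * c + 1) / Lr ^ 3 := by
        have hPeq : ((2 * Real.pi) ^ 2)⁻¹ * ((n : ℝ) * P) =
            (4 * Real.pi * ((n : ℝ) * B) ^ 2 * n + 2 * (n : ℝ) ^ 2 * c) / Lr ^ 3 := by
          rw [hPdef, htdef]
          field_simp [hL0.ne', Real.pi_ne_zero]
          ring
        rw [hPeq]
        have h9 : (0 : ℝ) < Lr ^ 3 := pow_pos hL0 3
        exact (div_le_div_iff_of_pos_right h9).mpr (by linarith)
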